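/- The sequence of coefficients of (1 + x + ... + x^n)^d is unimodal with maximum at k = ⌊nd/2⌋: C_n(d,k) ≤ C_n(d,k+1) for all 0 ≤ k < ⌊nd/2⌋, and C_n(d,k) ≥ C_n(d,k+1) for all ⌊nd/2⌋ ≤ k < nd. -/

import Mathlib

open Polynomial Finset

/-- `f` is supported on `[0,m]`, symmetric about `m/2`, and nondecreasing up to the middle. -/
def SymUni (m : ℤ) (f : ℤ → ℕ) : Prop :=
  (∀ k, k < 0 → f k = 0) ∧ (∀ k, f k = f (m - k)) ∧
  (∀ j k : ℤ, j ≤ k → 2 * k ≤ m → f j ≤ f k)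

lemma SymUni.mid {m : ℤ} {f : ℤ → ℕ} (h : SymUni m f) {j i : ℤ}
    (hji : j ≤ i) (him : i ≤ m - j) : f j ≤ f i := by
  obtain ⟨h0, hsym, hmono⟩ := h
  by_cases hc : 2 * i ≤ m
  · exact hmono j i hji hc
  · have : f i = f (m - i) := by rw [hsym i]
    rw [this]
    exact hmono j (m - i) (by omega) (by omega)

lemma SymUni.window (n : ℕ) {m : ℤ} {f : ℤ → ℕ} (h : SymUni m f) :
    SymUni (m + n) (fun k => ∑ i ∈ Finset.range (n + 1), f (k - i)) := by
  obtain ⟨h0, hsym, hmono⟩ := h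
  have hstep : ∀ t : ℤ, 2 * (t + 1) ≤ m + n →
      (∑ i ∈ Finset.range (n + 1), f (t - i)) ≤
        ∑ i ∈ Finset.range (n + 1), f (t + 1 - i) := by
    intro t ht
    have e1 : (∑ i ∈ Finset.range (n + 1), f (t - i)) =
        (∑ i ∈ Finset.range n, f (t - i)) + f (t - n) := by
      rw [Finset.sum_range_succ]
    have e2 : (∑ i ∈ Finset.range (n + 1), f (t + 1 - i)) =
        (∑ i ∈ Finset.range n, f (t - i)) + f (t + 1) := by
      rw [Finset.sum_range_succ']
      congr 1
      · apply Finset.sum_congr rfl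
        intro i _
        congr 1
        push_cast
        ring
      · norm_num
    rw [e1, e2]
    have : f (t - n) ≤ f (t + 1) :=
      SymUni.mid ⟨h0, hsym, hmono⟩ (by omega) (by omega)
    omega
  refine ⟨?_, ?_, ?_⟩
  · intro k hk
    apply Finset.sum_eq_zero
    intro i _
    exact h0 _ (by omega)
  · intro k
    simp only
    rw [← Finset.sum_range_reflect]
    apply Finset.sum_congr rfl
    intro i hi
    simp only [Finset.mem_range] at hi
    rw [hsym]
    congr 1
    omega
  · intro j k hjk hk
    have key : ∀ (N : ℕ) (j : ℤ), 2 * (j + N) ≤ m + n →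
        (∑ i ∈ Finset.range (n + 1), f (j - i)) ≤
          ∑ i ∈ Finset.range (n + 1), f (j + N - i) := by
      intro N
      induction N with
      | zero => intro j _; simp
      | succ N ih =>
        intro j hj
        calc (∑ i ∈ Finset.range (n + 1), f (j - i))
            ≤ ∑ i ∈ Finset.range (n + 1), f (j + N - i) := ih j (by push_cast at hj ⊢; omega)
          _ ≤ ∑ i ∈ Finset.range (n + 1), f (j + N + 1 - i) := by
              have := hstep (j + N) (by push_cast at hj ⊢; omega)
              convert this using 3 <;> omega
          _ = ∑ i ∈ Finset.range (n + 1), f (j + (N + 1 : ℕ) - i) := by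
              apply Finset.sum_congr rfl; intro i _; congr 1; push_cast; ring
    have hk' : k = j + ((k - j).toNat : ℤ) := by omega
    rw [hk']
    exact key _ j (by omega)

/-- The ℤ-indexed coefficient function of `(1 + X + ⋯ + X^n)^d`. -/
noncomputable def F (n d : ℕ) : ℤ → ℕ := fun k =>
  if 0 ≤ k then (((∑ i ∈ Finset.range (n + 1), (Polynomial.X : Polynomial ℕ) ^ i) ^ d).coeff
    k.toNat) else 0

lemma F_zero (n : ℕ) : SymUni 0 (F n 0) := by
  have hF : ∀ k : ℤ, F n 0 k = if k = 0 then 1 else 0 := by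
    intro k
    unfold F
    by_cases h : 0 ≤ k
    · simp only [pow_zero, if_pos h, Polynomial.coeff_one]
      by_cases h0 : k = 0
      · simp [h0]
      · rw [if_neg (by omega), if_neg h0]
    · rw [if_neg h, if_neg (by omega)]
  refine ⟨?_, ?_, ?_⟩
  · intro k hk; rw [hF]; exact if_neg (by omega)
  · intro k; rw [hF, hF]; congr 1; simp only [eq_iff_iff]; omega
  · intro j k hjk hk
    rw [hF, hF]
    by_cases h0 : k = 0
    · have : (if j = 0 then 1 else 0) ≤ 1 := by split <;> omega
      simpa [h0] using this
    · rw [if_neg (by omega), if_neg h0]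

lemma F_succ (n d : ℕ) (k : ℤ) :
    F n (d + 1) k = ∑ i ∈ Finset.range (n + 1), F n d (k - i) := by
  by_cases hk : 0 ≤ k
  · unfold F
    rw [if_pos hk, pow_succ, Finset.mul_sum, Polynomial.finset_sum_coeff]
    apply Finset.sum_congr rfl
    intro i hi
    rw [Polynomial.coeff_mul_X_pow']
    by_cases hik : (i : ℤ) ≤ k
    · rw [if_pos (by omega), if_pos (by omega)]
      congr 1
      omega
    · rw [if_neg (by omega), if_neg (by omega)]
  · unfold F
    rw [if_neg hk]
    symm
    apply Finset.sum_eq_zero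
    intro i _
    exact if_neg (by omega)

lemma F_symuni (n d : ℕ) : SymUni (n * d) (F n d) := by
  induction d with
  | zero => simpa using F_zero n
  | succ d ih =>
    have := (ih.window n)
    have h : ((n : ℤ) * d + n) = (n : ℤ) * (d + 1) := by ring
    have heq : F n (d + 1) = fun k => ∑ i ∈ Finset.range (n + 1), F n d (k - i) := by
      funext k; exact F_succ n d k
    have h : (n : ℤ) * ((d + 1 : ℕ) : ℤ) = (n : ℤ) * d + n := by push_cast; ring
    rw [heq, h]
    exact this

theorem coeff_unimodal (n d : ℕ) (hn : 1 ≤ n) (hd : 1 ≤ d) :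
    (∀ k, k < n * d / 2 →
      ((∑ i ∈ Finset.range (n + 1), (Polynomial.X : Polynomial ℕ) ^ i) ^ d).coeff k ≤
        ((∑ i ∈ Finset.range (n + 1), (Polynomial.X : Polynomial ℕ) ^ i) ^ d).coeff (k + 1)) ∧
    (∀ k, n * d / 2 ≤ k → k < n * d →
      ((∑ i ∈ Finset.range (n + 1), (Polynomial.X : Polynomial ℕ) ^ i) ^ d).coeff (k + 1) ≤
        ((∑ i ∈ Finset.range (n + 1), (Polynomial.X : Polynomial ℕ) ^ i) ^ d).coeff k) := by
  have hS := F_symuni n d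
  have hco : ∀ k : ℕ, ((∑ i ∈ Finset.range (n + 1),
      (Polynomial.X : Polynomial ℕ) ^ i) ^ d).coeff k = F n d k := by
    intro k
    unfold F
    rw [if_pos (by positivity), Int.toNat_natCast]
  constructor
  · intro k hk
    rw [hco, hco]
    have : (2 : ℤ) * (k + 1) ≤ (n : ℤ) * d := by
      have : 2 * (k + 1) ≤ n * d := by omega
      push_cast at this ⊢
      omega
    have := hS.2.2 (k : ℤ) ((k : ℤ) + 1) (by omega) this
    simpa using this
  · intro k hk1 hk2
    rw [hco, hco]
    set m : ℤ := (n : ℤ) * d with hm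
    have hmk : ((n * d : ℕ) : ℤ) = m := by push_cast; ring
    have hsym := hS.2.1
    have h1 : F n d (k + 1) = F n d (m - (k + 1)) := hsym _
    have h2 : F n d (m - k) = F n d k := by rw [hsym (m - k)]; congr 1; ring
    have hmle : m ≤ 2 * k + 1 := by
      have : n * d ≤ 2 * k + 1 := by omega
      rw [hm]; push_cast at this ⊢; omega
    have hmid : F n d (m - (k + 1)) ≤ F n d (m - k) :=
      hS.mid (by omega) (by omega)
    push_cast at h1 h2 hmid ⊢
    omega
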